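/- Let f : U → V be a C¹ map between open subsets U ⊆ ℝⁿ and V ⊆ ℝᵖ. If there exists a bi-Lipschitz homeomorphism of the form (f, ψ) : U → V × F, where F is a C¹ submanifold of some ℝ^q, then f has no critical points in U, i.e., the differential of f has rank p at every point of U. -/

import Mathlib

/-- `F` is a `C¹` submanifold of dimension `m` of `ℝ^q`: near each of its points there is a
`C¹` chart of the ambient space straightening `F` onto the coordinate subspace of the
first `m` coordinates. -/
def IsC1Submanifold {q : ℕ} (F : Set (EuclideanSpace ℝ (Fin q))) (m : ℕ) : Prop :=
  ∀ y ∈ F, ∃ φ : PartialHomeomorph (EuclideanSpace ℝ (Fin q)) (EuclideanSpace ℝ (Fin q)),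
    y ∈ φ.source ∧ ContDiffOn ℝ 1 φ φ.source ∧ ContDiffOn ℝ 1 φ.symm φ.target ∧
    φ.source ∩ F = φ.source ∩ φ ⁻¹' {z : EuclideanSpace ℝ (Fin q) | ∀ i : Fin q, m ≤ (i : ℕ) → z i = 0}

/-- if `(f, ψ) : U → V × F` is a bi-Lipschitz homeomorphism with `f` of
class `C¹`, then `f` has no critical point in `U`. -/
theorem stmt_2 {n p q m : ℕ}
    (U : Set (EuclideanSpace ℝ (Fin n))) (hU : IsOpen U)
    (V : Set (EuclideanSpace ℝ (Fin p))) (hV : IsOpen V)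
    (F : Set (EuclideanSpace ℝ (Fin q))) (hF : IsC1Submanifold F m)
    (f : EuclideanSpace ℝ (Fin n) → EuclideanSpace ℝ (Fin p))
    (ψ : EuclideanSpace ℝ (Fin n) → EuclideanSpace ℝ (Fin q))
    (hf : ContDiffOn ℝ 1 f U)
    (hfV : Set.MapsTo f U V) (hψF : Set.MapsTo ψ U F)
    (G : ↥U ≃ ↥V × ↥F)
    (hGdef : ∀ x : ↥U, ((G x).1 : EuclideanSpace ℝ (Fin p)) = f x ∧
      ((G x).2 : EuclideanSpace ℝ (Fin q)) = ψ x)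
    (K K' : NNReal) (hG : LipschitzWith K G) (hG' : LipschitzWith K' G.symm) :
    ∀ x ∈ U, Function.Surjective (fderiv ℝ f x) := by
  intro x hx
  by_contra hsurj
  have hdiff : DifferentiableAt ℝ f x :=
    (hf.contDiffAt (hU.mem_nhds hx)).differentiableAt one_ne_zero
  set T := fderiv ℝ f x with hT
  set Kr := LinearMap.range (T : EuclideanSpace ℝ (Fin n) →ₗ[ℝ] EuclideanSpace ℝ (Fin p))
    with hKr
  have hrange : Kr ≠ ⊤ := by
    intro h
    exact hsurj (LinearMap.range_eq_top.mp h)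
  obtain ⟨w, hwK, hw0⟩ : ∃ w ∈ Krᗮ, w ≠ 0 := by
    rw [← Submodule.ne_bot_iff]
    intro hbot
    exact hrange (Submodule.orthogonal_eq_bot_iff.mp hbot)
  set v : EuclideanSpace ℝ (Fin p) := ‖w‖⁻¹ • w with hv
  have hnw : ‖w‖ ≠ 0 := norm_ne_zero_iff.mpr hw0
  have hvnorm : ‖v‖ = 1 := by
    rw [hv, norm_smul, norm_inv, norm_norm, inv_mul_cancel₀ hnw]
  have hvK : v ∈ Krᗮ := Submodule.smul_mem _ _ hwK
  -- little-o
  set ε : ℝ := (2 * (K' : ℝ) + 1)⁻¹ with hε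
  have hεpos : 0 < ε := by positivity
  have hlo := (hdiff.hasFDerivAt.isLittleO).def hεpos
  rw [Metric.eventually_nhds_iff] at hlo
  obtain ⟨δ, hδpos, hδ⟩ := hlo
  obtain ⟨δ₁, hδ₁pos, hball⟩ := Metric.isOpen_iff.mp hV (f x) (hfV hx)
  set t : ℝ := min (δ₁ / 2) (δ / (2 * (K' : ℝ) + 1)) with ht
  have htpos : 0 < t := lt_min (by positivity) (by positivity)
  have hKt : (K' : ℝ) * t < δ := by
    have h1 : t ≤ δ / (2 * (K' : ℝ) + 1) := min_le_right _ _
    have h2 : (K' : ℝ) * t ≤ (K' : ℝ) * (δ / (2 * (K' : ℝ) + 1)) :=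
      mul_le_mul_of_nonneg_left h1 K'.coe_nonneg
    have hc : (0:ℝ) < 2 * (K' : ℝ) + 1 := by positivity
    have hq : (K' : ℝ) * (δ / (2 * (K' : ℝ) + 1)) < δ := by
      rw [mul_div_assoc', div_lt_iff₀ hc]
      nlinarith [K'.coe_nonneg, hδpos]
    linarith
  have hyV : f x + t • v ∈ V := by
    apply hball
    rw [Metric.mem_ball, dist_eq_norm, add_sub_cancel_left, norm_smul, hvnorm,
      mul_one, Real.norm_eq_abs, abs_of_pos htpos]
    exact lt_of_le_of_lt (min_le_left _ _) (by linarith)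
  set a : ↥V × ↥F := (⟨f x + t • v, hyV⟩, (G ⟨x, hx⟩).2) with ha
  set u : ↥U := G.symm a with hu
  have hGu : G u = a := G.apply_symm_apply a
  have hfu : f (u : EuclideanSpace ℝ (Fin n)) = f x + t • v := by
    have h1 := (hGdef u).1
    rw [hGu] at h1
    exact h1.symm
  have hdist : dist (u : EuclideanSpace ℝ (Fin n)) x ≤ (K' : ℝ) * t := by
    have h1 := hG'.dist_le_mul a (G ⟨x, hx⟩)
    rw [← hu, G.symm_apply_apply] at h1
    have h2 : dist a (G ⟨x, hx⟩) = t := by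
      rw [Prod.dist_eq, ha]
      simp only [dist_self]
      rw [Subtype.dist_eq]
      have h3 := (hGdef ⟨x, hx⟩).1
      simp only [h3]
      rw [dist_eq_norm, add_sub_cancel_left, norm_smul, hvnorm, mul_one,
        Real.norm_eq_abs, abs_of_pos htpos]
      exact max_eq_left htpos.le
    rw [h2] at h1
    rw [Subtype.dist_eq] at h1
    exact h1
  have hδu : dist (u : EuclideanSpace ℝ (Fin n)) x < δ := lt_of_le_of_lt hdist hKt
  have hbound := hδ hδu
  -- inner product computation
  have hinner : inner ℝ v (f (u : EuclideanSpace ℝ (Fin n)) - f x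
      - T ((u : EuclideanSpace ℝ (Fin n)) - x)) = t := by
    rw [inner_sub_right, hfu, add_sub_cancel_left, real_inner_smul_right,
      real_inner_self_eq_norm_sq, hvnorm]
    have h0 : inner ℝ v (T ((u : EuclideanSpace ℝ (Fin n)) - x)) = (0 : ℝ) := by
      rw [real_inner_comm]
      exact hvK _ (LinearMap.mem_range_self _ _)
    rw [h0]
    ring
  have hle : t ≤ ε * ((K' : ℝ) * t) := by
    calc t = inner ℝ v (f (u : EuclideanSpace ℝ (Fin n)) - f x
        - T ((u : EuclideanSpace ℝ (Fin n)) - x)) := hinner.symm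
      _ ≤ ‖v‖ * ‖f (u : EuclideanSpace ℝ (Fin n)) - f x
          - T ((u : EuclideanSpace ℝ (Fin n)) - x)‖ := real_inner_le_norm _ _
      _ = ‖f (u : EuclideanSpace ℝ (Fin n)) - f x
          - T ((u : EuclideanSpace ℝ (Fin n)) - x)‖ := by rw [hvnorm, one_mul]
      _ ≤ ε * ‖(u : EuclideanSpace ℝ (Fin n)) - x‖ := hbound
      _ ≤ ε * ((K' : ℝ) * t) := by
          apply mul_le_mul_of_nonneg_left _ hεpos.le
          rw [← dist_eq_norm]
          exact hdist
  have hεK : ε * (K' : ℝ) < 1 := by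
    have hc : (0:ℝ) < 2 * (K' : ℝ) + 1 := by positivity
    have heq : ε * (K' : ℝ) = (K' : ℝ) / (2 * (K' : ℝ) + 1) := by
      rw [hε, inv_mul_eq_div]
    rw [heq, div_lt_one hc]
    linarith [K'.coe_nonneg]
  nlinarith [htpos, hle, hεK]
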